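/- Let s, t ≥ 0 with |t - s| > 1. Then the function z(x) = [Γ(x+t)/Γ(x+s)]^{1/(t-s)} − x is increasing on (0, ∞). -/

import Mathlib

noncomputable def z (s t x : ℝ) : ℝ :=
  (Real.Gamma (x + t) / Real.Gamma (x + s)) ^ ((1 : ℝ) / (t - s)) - x

open Real Set Filter Topology

noncomputable def psi (x : ℝ) : ℝ := deriv (fun y => Real.log (Real.Gamma y)) x

lemma diffAt_logGamma {x : ℝ} (hx : 0 < x) :
    DifferentiableAt ℝ (fun y => Real.log (Real.Gamma y)) x := by
  refine ((Real.differentiableAt_Gamma ?_).log (Real.Gamma_ne_zero ?_)) <;>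
    exact fun m => ne_of_gt ((neg_nonpos.mpr (Nat.cast_nonneg m)).trans_lt hx)

lemma hasDerivAt_logGamma {x : ℝ} (hx : 0 < x) :
    HasDerivAt (fun y => Real.log (Real.Gamma y)) (psi x) x :=
  (diffAt_logGamma hx).hasDerivAt

lemma logGamma_rec {x : ℝ} (hx : 0 < x) :
    Real.log (Real.Gamma (x + 1)) = Real.log (Real.Gamma x) + Real.log x := by
  rw [Real.Gamma_add_one hx.ne', Real.log_mul hx.ne' (Real.Gamma_pos_of_pos hx).ne', add_comm]

lemma psi_rec {x : ℝ} (hx : 0 < x) : psi (x + 1) = psi x + 1 / x := by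
  unfold psi
  rw [← deriv_comp_add_const, one_div, ← Real.deriv_log,
    ← deriv_add (diffAt_logGamma hx) (Real.differentiableAt_log hx.ne')]
  apply Filter.EventuallyEq.deriv_eq
  filter_upwards [eventually_gt_nhds hx] with y hy
  exact logGamma_rec hy

lemma psi_le_log {x : ℝ} (hx : 0 < x) : psi x ≤ Real.log x := by
  have hco : ConvexOn ℝ (Ioi 0) (fun y => Real.log (Real.Gamma y)) := Real.convexOn_log_Gamma
  have h := hco.deriv_le_slope (mem_Ioi.mpr hx)
    (mem_Ioi.mpr (by linarith : (0:ℝ) < x + 1)) (by linarith) (diffAt_logGamma hx)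
  rwa [slope_def_field, add_sub_cancel_left, div_one, logGamma_rec hx,
    add_sub_cancel_left] at h

lemma log_le_psi_add_one {x : ℝ} (hx : 0 < x) : Real.log x ≤ psi (x + 1) := by
  have hco : ConvexOn ℝ (Ioi 0) (fun y => Real.log (Real.Gamma y)) := Real.convexOn_log_Gamma
  have h := hco.slope_le_deriv (mem_Ioi.mpr hx)
    (mem_Ioi.mpr (by linarith : (0:ℝ) < x + 1)) (by linarith) (diffAt_logGamma (by linarith))
  rwa [slope_def_field, add_sub_cancel_left, div_one, logGamma_rec hx,
    add_sub_cancel_left] at h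

lemma psi_add_nat {x : ℝ} (hx : 0 < x) (n : ℕ) :
    psi (x + n) = psi x + ∑ k ∈ Finset.range n, 1 / (x + k) := by
  induction n with
  | zero => simp
  | succ n ih =>
    have hxn : 0 < x + n := by positivity
    have : x + (n + 1 : ℕ) = (x + n) + 1 := by push_cast; ring
    rw [this, psi_rec hxn, ih, Finset.sum_range_succ, add_assoc]

lemma tendsto_psi_diff {u v : ℝ} (hu : 0 < u) (huv : u ≤ v) :
    Tendsto (fun n : ℕ => psi (v + n) - psi (u + n)) atTop (𝓝 0) := by
  have hv : 0 < v := lt_of_lt_of_le hu huv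
  have hlow : ∀ n : ℕ, 1 ≤ n → Real.log ((v + n - 1) / (u + n)) ≤ psi (v + n) - psi (u + n) := by
    intro n hn
    have h1 : (0:ℝ) < v + n - 1 := by
      have : (1:ℝ) ≤ n := by exact_mod_cast hn
      linarith
    have h2 : (0:ℝ) < u + n := by positivity
    have e1 : Real.log (v + n - 1) ≤ psi (v + n) := by
      have := log_le_psi_add_one h1
      rwa [show v + n - 1 + 1 = v + n by ring] at this
    have e2 : psi (u + n) ≤ Real.log (u + n) := psi_le_log h2
    rw [Real.log_div h1.ne' h2.ne']
    linarith
  have hhigh : ∀ n : ℕ, 1 ≤ n → psi (v + n) - psi (u + n) ≤ Real.log ((v + n) / (u + n - 1)) := by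
    intro n hn
    have h1 : (0:ℝ) < u + n - 1 := by
      have : (1:ℝ) ≤ n := by exact_mod_cast hn
      linarith
    have h2 : (0:ℝ) < v + n := by positivity
    have e1 : psi (v + n) ≤ Real.log (v + n) := psi_le_log h2
    have e2 : Real.log (u + n - 1) ≤ psi (u + n) := by
      have := log_le_psi_add_one h1
      rwa [show u + n - 1 + 1 = u + n by ring] at this
    rw [Real.log_div h2.ne' h1.ne']
    linarith
  have hto : ∀ c₁ c₂ : ℝ, Tendsto (fun n : ℕ => Real.log ((c₁ + n) / (c₂ + n))) atTop (𝓝 0) := by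
    intro c₁ c₂
    have h1 : Tendsto (fun n : ℕ => (c₁ + n) / (c₂ + n)) atTop (𝓝 1) := by
      have : (fun n : ℕ => (c₁ + n) / (c₂ + n)) =ᶠ[atTop] fun n : ℕ => (c₁ / n + 1) / (c₂ / n + 1) := by
        filter_upwards [eventually_gt_atTop 0] with n hn
        have hn' : (n:ℝ) ≠ 0 := by positivity
        field_simp
      rw [tendsto_congr' this]
      have hc : ∀ c : ℝ, Tendsto (fun n : ℕ => c / n + 1) atTop (𝓝 1) := by
        intro c
        have := Filter.Tendsto.div_atTop (tendsto_const_nhds (x := c)) tendsto_natCast_atTop_atTop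
        simpa using this.add tendsto_const_nhds
      have h := (hc c₁).div (hc c₂) one_ne_zero
      rw [div_one] at h
      exact h
    have := (Real.continuousAt_log one_ne_zero).tendsto.comp h1
    rw [Real.log_one] at this
    exact this
  apply tendsto_of_tendsto_of_tendsto_of_le_of_le' (g := fun n : ℕ => Real.log ((v - 1 + n) / (u + n)))
      (h := fun n : ℕ => Real.log ((v + n) / (u - 1 + n)))
  · simpa using hto (v - 1) u
  · simpa using hto v (u - 1)
  · filter_upwards [eventually_ge_atTop 1] with n hn
    have := hlow n hn
    rwa [show v - 1 + (n:ℝ) = v + n - 1 by ring]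
  · filter_upwards [eventually_ge_atTop 1] with n hn
    have := hhigh n hn
    rwa [show u - 1 + (n:ℝ) = u + n - 1 by ring]

lemma hasSum_psi_diff {u v : ℝ} (hu : 0 < u) (huv : u < v) :
    HasSum (fun k : ℕ => 1 / (u + k) - 1 / (v + k)) (psi v - psi u) := by
  have hv : 0 < v := hu.trans huv
  have hnn : ∀ k : ℕ, 0 ≤ 1 / (u + k) - 1 / (v + k) := by
    intro k
    have h1 : (0:ℝ) < u + k := by positivity
    have h2 : (0:ℝ) < v + k := by positivity
    rw [sub_nonneg]
    exact one_div_le_one_div_of_le h1 (by linarith)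
  rw [hasSum_iff_tendsto_nat_of_nonneg hnn]
  have key : ∀ n : ℕ, ∑ k ∈ Finset.range n, (1 / (u + k) - 1 / (v + k))
      = (psi v - psi u) - (psi (v + n) - psi (u + n)) := by
    intro n
    rw [Finset.sum_sub_distrib]
    have h1 := psi_add_nat hu n
    have h2 := psi_add_nat hv n
    linarith
  simp_rw [key]
  have := tendsto_psi_diff hu huv.le
  simpa using (tendsto_const_nhds (x := psi v - psi u)).sub this

lemma hasSum_tele {w : ℝ} (hw : 0 < w) :
    HasSum (fun k : ℕ => 1 / ((w + k) * (w + k + 1))) (1 / w) := by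
  have hnn : ∀ k : ℕ, 0 ≤ 1 / ((w + k) * (w + k + 1)) := by
    intro k; positivity
  rw [hasSum_iff_tendsto_nat_of_nonneg hnn]
  have key : ∀ n : ℕ, ∑ k ∈ Finset.range n, 1 / ((w + k) * (w + k + 1)) = 1 / w - 1 / (w + n) := by
    intro n
    have : ∀ k : ℕ, 1 / ((w + k) * (w + k + 1))
        = (fun i : ℕ => 1 / (w + i)) k - (fun i : ℕ => 1 / (w + i)) (k + 1) := by
      intro k
      have h1 : (0:ℝ) < w + k := by positivity
      have h2 : (0:ℝ) < w + k + 1 := by positivity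
      simp only []
      push_cast
      rw [show w + ((k:ℝ) + 1) = w + (k:ℝ) + 1 by ring, div_sub_div _ _ h1.ne' h2.ne', show (1:ℝ)*(w+↑k+1) - (w+↑k)*1 = 1 by ring]
    simp_rw [this]
    rw [Finset.sum_range_sub' (f := fun k : ℕ => 1 / (w + k))]
    simp
  simp_rw [key]
  have h0 : Tendsto (fun n : ℕ => 1 / (w + n)) atTop (𝓝 0) := by
    simp_rw [one_div]
    apply Tendsto.inv_tendsto_atTop
    exact tendsto_atTop_add_const_left _ _ tendsto_natCast_atTop_atTop
  simpa using (tendsto_const_nhds (x := 1 / w)).sub h0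

lemma summable_inv_sq {w : ℝ} (hw : 0 < w) : Summable (fun k : ℕ => 1 / (w + k) ^ 2) := by
  refine Summable.of_nonneg_of_le (fun k => by positivity) (fun k => ?_)
    ((hasSum_tele hw).summable.mul_left ((w + 1) / w))
  have h1 : (0:ℝ) < w + k := by positivity
  have h2 : (0:ℝ) < w + k + 1 := by positivity
  rw [div_mul_div_comm, mul_one, div_le_div_iff₀ (by positivity) (by positivity)]
  nlinarith [sq_nonneg ((k:ℝ)), h1.le, (Nat.cast_nonneg k : (0:ℝ) ≤ k)]

lemma term_bound {y d : ℝ} (hy : 0 < y) (hd : 1 < d) (k : ℕ) :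
    1 / ((y + ((k:ℝ) + 1)) * (y + ((k:ℝ) + 1) + d))
      ≤ ((y + 1 + d / 2) ^ 2 - 1 / 4) / ((y + 1 + d / 2) ^ 2 - (d / 2) ^ 2)
        * (1 / ((y + (d + 1) / 2 + k) * (y + (d + 1) / 2 + k + 1))) := by
  have hk : (0:ℝ) ≤ (k:ℝ) := Nat.cast_nonneg k
  have hDn : (0:ℝ) < (y + 1 + d / 2) ^ 2 - (d / 2) ^ 2 := by nlinarith
  have h1 : (0:ℝ) < y + ((k:ℝ) + 1) := by linarith
  have h2 : (0:ℝ) < y + ((k:ℝ) + 1) + d := by linarith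
  have h3 : (0:ℝ) < y + (d + 1) / 2 + k := by linarith
  have h4 : (0:ℝ) < y + (d + 1) / 2 + k + 1 := by linarith
  rw [div_mul_div_comm, mul_one,
    div_le_div_iff₀ (by positivity) (by positivity), ← sub_nonneg]
  have iden : ((y + 1 + d / 2) ^ 2 - 1 / 4) * ((y + ((k:ℝ) + 1)) * (y + ((k:ℝ) + 1) + d))
      - 1 * (((y + 1 + d / 2) ^ 2 - (d / 2) ^ 2) * ((y + (d + 1) / 2 + k) * (y + (d + 1) / 2 + k + 1)))
      = ((y + 1 + (k:ℝ) + d / 2) ^ 2 - (y + 1 + d / 2) ^ 2) * ((d / 2) ^ 2 - 1 / 4) := by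
    ring
  rw [iden]
  have hfac1 : (0:ℝ) ≤ (y + 1 + (k:ℝ) + d / 2) ^ 2 - (y + 1 + d / 2) ^ 2 := by nlinarith
  have hfac2 : (0:ℝ) ≤ (d / 2) ^ 2 - 1 / 4 := by nlinarith
  exact mul_nonneg hfac1 hfac2

lemma final_bound {y d : ℝ} (hy : 0 < y) (hd : 1 < d) :
    1 / (y * (y + d)) + 2 * (((y + 1 + d / 2) ^ 2 - 1 / 4) / ((y + 1 + d / 2) ^ 2 - (d / 2) ^ 2)
      * (1 / (y + (d + 1) / 2))) < 1 / y + 1 / (y + d) := by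
  have hyd : (0:ℝ) < y + d := by linarith
  have hDn : (0:ℝ) < (y + 1 + d / 2) ^ 2 - (d / 2) ^ 2 := by nlinarith
  have hw : (0:ℝ) < y + (d + 1) / 2 := by linarith
  have e1 : 1 / y + 1 / (y + d) - 1 / (y * (y + d)) = (2 * y + d - 1) / (y * (y + d)) := by
    field_simp
    ring
  have key : 2 * (((y + 1 + d / 2) ^ 2 - 1 / 4) / ((y + 1 + d / 2) ^ 2 - (d / 2) ^ 2)
      * (1 / (y + (d + 1) / 2))) < (2 * y + d - 1) / (y * (y + d)) := by
    rw [div_mul_div_comm, mul_one, mul_div_assoc' 2, div_lt_div_iff₀ (by positivity) (by positivity),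
      ← sub_pos]
    have iden : (2 * y + d - 1) * (((y + 1 + d / 2) ^ 2 - (d / 2) ^ 2) * (y + (d + 1) / 2))
        - 2 * ((y + 1 + d / 2) ^ 2 - 1 / 4) * (y * (y + d))
        = (d ^ 2 - 1) * (2 * (y + d / 2) + 1) / 2 := by
      ring
    rw [iden]
    have h1 : (0:ℝ) < d ^ 2 - 1 := by nlinarith
    positivity
  linarith

/-- Claim (C): the key elementary inequality. -/
lemma claimC {y d : ℝ} (hy : 0 < y) (hd : 1 < d) :
    (psi (y + d) - psi y) + (psi (y + 1 + d) - psi (y + 1)) < d * (1 / y + 1 / (y + d)) := by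
  have hd0 : (0:ℝ) < d := by linarith
  have hw : (0:ℝ) < y + (d + 1) / 2 := by linarith
  have hA : HasSum (fun k : ℕ => 1 / ((y + k) * (y + k + d))) ((psi (y + d) - psi y) / d) := by
    have h := (hasSum_psi_diff hy (show y < y + d by linarith)).div_const d
    have he : (fun k : ℕ => (1 / (y + k) - 1 / (y + d + k)) / d)
        = fun k : ℕ => 1 / ((y + k) * (y + k + d)) := by
      funext k
      have h1 : (0:ℝ) < y + k := by positivity
      have h2 : (0:ℝ) < y + d + k := by positivity
      field_simp
      ring
    rwa [he] at h
  have hB : HasSum (fun k : ℕ => 1 / ((y + ((k : ℝ) + 1)) * (y + ((k : ℝ) + 1) + d)))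
      ((psi (y + 1 + d) - psi (y + 1)) / d) := by
    have h := (hasSum_psi_diff (show (0:ℝ) < y + 1 by linarith)
      (show y + 1 < y + 1 + d by linarith)).div_const d
    have he : (fun k : ℕ => (1 / (y + 1 + k) - 1 / (y + 1 + d + k)) / d)
        = fun k : ℕ => 1 / ((y + ((k : ℝ) + 1)) * (y + ((k : ℝ) + 1) + d)) := by
      funext k
      have h1 : (0:ℝ) < y + 1 + k := by positivity
      have h2 : (0:ℝ) < y + 1 + d + k := by positivity
      field_simp
      ring
    rwa [he] at h
  -- A = B + f 0
  have hshift : HasSum (fun k : ℕ => 1 / ((y + ((k + 1 : ℕ):ℝ)) * (y + ((k + 1 : ℕ):ℝ) + d)))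
      ((psi (y + 1 + d) - psi (y + 1)) / d) := by
    have he : (fun k : ℕ => 1 / ((y + ((k + 1 : ℕ):ℝ)) * (y + ((k + 1 : ℕ):ℝ) + d)))
        = fun k : ℕ => 1 / ((y + ((k : ℝ) + 1)) * (y + ((k : ℝ) + 1) + d)) := by
      funext k; push_cast; ring_nf
    rw [he]; exact hB
  have h2 := (hasSum_nat_add_iff (f := fun k : ℕ => 1 / ((y + (k:ℝ)) * (y + (k:ℝ) + d))) 1).mp hshift
  have hA_eq : (psi (y + d) - psi y) / d
      = (psi (y + 1 + d) - psi (y + 1)) / d + 1 / (y * (y + d)) := by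
    refine hA.unique ?_
    convert h2 using 1
    · rfl
    simp
  have hB_le : (psi (y + 1 + d) - psi (y + 1)) / d
      ≤ ((y + 1 + d / 2) ^ 2 - 1 / 4) / ((y + 1 + d / 2) ^ 2 - (d / 2) ^ 2)
        * (1 / (y + (d + 1) / 2)) := by
    have h := (hasSum_tele hw).mul_left
      (((y + 1 + d / 2) ^ 2 - 1 / 4) / ((y + 1 + d / 2) ^ 2 - (d / 2) ^ 2))
    exact hasSum_le (fun k => term_bound hy hd k) hB h
  have hsum : (psi (y + d) - psi y) / d + (psi (y + 1 + d) - psi (y + 1)) / d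
      < 1 / y + 1 / (y + d) := by
    have := final_bound hy hd
    rw [hA_eq]
    linarith
  calc (psi (y + d) - psi y) + (psi (y + 1 + d) - psi (y + 1))
      = d * ((psi (y + d) - psi y) / d + (psi (y + 1 + d) - psi (y + 1)) / d) := by
        field_simp
    _ < d * (1 / y + 1 / (y + d)) := (mul_lt_mul_iff_right₀ hd0).mpr hsum

lemma psi_diff_pos {y d : ℝ} (hy : 0 < y) (hd : 0 < d) : 0 < psi (y + d) - psi y := by
  have h := hasSum_psi_diff hy (show y < y + d by linarith)
  have h0 : (0:ℝ) < 1 / (y + ((0:ℕ):ℝ)) - 1 / (y + d + ((0:ℕ):ℝ)) := by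
    push_cast
    simp only [add_zero]
    rw [sub_pos]
    exact one_div_lt_one_div_of_lt hy (by linarith)
  have hle := le_hasSum h 0 (fun j _ => ?_)
  · linarith
  · have h1 : (0:ℝ) < y + j := by positivity
    rw [sub_nonneg]
    exact one_div_le_one_div_of_le h1 (by linarith)

lemma psi_diff_le {y d : ℝ} (hy : 0 < y) (hd : 1 ≤ d) : psi (y + d) - psi y ≤ d / y := by
  have h := hasSum_psi_diff hy (show y < y + d by linarith)
  have htele := (hasSum_tele hy).mul_left d
  rw [mul_one_div] at htele
  refine hasSum_le (fun k => ?_) h htele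
  have h1 : (0:ℝ) < y + k := by positivity
  have h2 : (0:ℝ) < y + d + k := by positivity
  have h3 : (0:ℝ) < y + k + 1 := by positivity
  have e : 1 / (y + k) - 1 / (y + d + k) = d / ((y + k) * (y + d + k)) := by
    field_simp
    ring
  rw [e, mul_one_div]
  apply div_le_div_of_nonneg_left (by linarith) (by positivity)
  nlinarith

lemma star {a d : ℝ} (ha : 0 < a) (hd : 1 < d) :
    (psi (a + d) - psi a) ^ 2 < d * ∑' k : ℕ, (1 / (a + (k:ℝ)) ^ 2 - 1 / (a + d + (k:ℝ)) ^ 2) := by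
  have hd0 : (0:ℝ) < d := by linarith
  set T : ℕ → ℝ := fun k => psi (a + k + d) - psi (a + k) with hT_def
  clear_value T
  have hTpos : ∀ k : ℕ, 0 < T k := by
    intro k; rw [hT_def]; exact psi_diff_pos (by positivity) hd0
  have hTle : ∀ k : ℕ, T k ≤ d / (a + k) := by
    intro k; rw [hT_def]; exact psi_diff_le (by positivity) hd.le
  have hstep : ∀ k : ℕ, T k - T (k + 1) = 1 / (a + k) - 1 / (a + k + d) := by
    intro k
    have hy : (0:ℝ) < a + k := by positivity
    have hyd : (0:ℝ) < a + k + d := by positivity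
    have e1 : a + ((k:ℝ) + 1) = (a + k) + 1 := by ring
    have e2 : a + ((k:ℝ) + 1) + d = (a + k + d) + 1 := by ring
    simp only [hT_def, Nat.cast_add, Nat.cast_one]
    rw [e2, e1, psi_rec hyd, psi_rec hy]
    ring
  have hTmono : ∀ k : ℕ, T (k + 1) ≤ T k := by
    intro k
    have hst := hstep k
    have h1 : (0:ℝ) < a + k := by positivity
    have h2 : 1 / (a + (k:ℝ) + d) ≤ 1 / (a + (k:ℝ)) := one_div_le_one_div_of_le h1 (by linarith)
    linarith [hst, h2]
  -- The telescoping sum of squares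
  have hsq : HasSum (fun k : ℕ => T k ^ 2 - T (k + 1) ^ 2) (T 0 ^ 2) := by
    have hnn : ∀ k : ℕ, 0 ≤ T k ^ 2 - T (k + 1) ^ 2 := by
      intro k
      have := hTmono k
      have := (hTpos (k + 1)).le
      nlinarith
    rw [hasSum_iff_tendsto_nat_of_nonneg hnn]
    have key : ∀ n : ℕ, ∑ k ∈ Finset.range n, (T k ^ 2 - T (k + 1) ^ 2) = T 0 ^ 2 - T n ^ 2 :=
      fun n => Finset.sum_range_sub' (fun k => T k ^ 2) n
    simp_rw [key]
    have hT0 : Tendsto (fun n : ℕ => T n ^ 2) atTop (𝓝 0) := by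
      have hTt : Tendsto T atTop (𝓝 0) := by
        apply tendsto_of_tendsto_of_tendsto_of_le_of_le (g := fun _ : ℕ => (0:ℝ))
            (h := fun n : ℕ => d / (a + n)) tendsto_const_nhds ?_ (fun n => (hTpos n).le) hTle
        have hinv : Tendsto (fun n : ℕ => (a + (n:ℝ))⁻¹) atTop (𝓝 0) :=
          Tendsto.inv_tendsto_atTop (tendsto_atTop_add_const_left _ _ tendsto_natCast_atTop_atTop)
        have h2 := hinv.const_mul d
        simp only [mul_zero] at h2
        simpa [div_eq_mul_inv] using h2
      have := hTt.pow 2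
      simpa using this
    simpa using (tendsto_const_nhds (x := T 0 ^ 2)).sub hT0
  -- termwise strict bound
  have hterm : ∀ k : ℕ, T k ^ 2 - T (k + 1) ^ 2
      < d * (1 / (a + (k:ℝ)) ^ 2 - 1 / (a + d + (k:ℝ)) ^ 2) := by
    intro k
    have hy : (0:ℝ) < a + k := by positivity
    have hyd : (0:ℝ) < a + k + d := by positivity
    have hC := claimC hy hd
    have hCT : T k + T (k + 1) < d * (1 / (a + k) + 1 / (a + k + d)) := by
      have e1 : T k = psi ((a + k) + d) - psi (a + k) := by simp only [hT_def]
      have e2 : T (k + 1) = psi ((a + k) + 1 + d) - psi ((a + k) + 1) := by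
        simp only [hT_def]
        push_cast
        ring_nf
      rw [e1, e2]
      exact hC
    have hα : (0:ℝ) < 1 / (a + k) - 1 / (a + k + d) := by
      rw [sub_pos]
      exact one_div_lt_one_div_of_lt hy (by linarith)
    have e3 : T k ^ 2 - T (k + 1) ^ 2 = (T k - T (k + 1)) * (T k + T (k + 1)) := by ring
    rw [e3, hstep k]
    have hmul := mul_lt_mul_of_pos_left hCT hα
    have e4 : (1 / (a + k) - 1 / (a + k + d)) * (d * (1 / (a + k) + 1 / (a + k + d)))
        = d * (1 / (a + (k:ℝ)) ^ 2 - 1 / (a + d + (k:ℝ)) ^ 2) := by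
      have h2 : (0:ℝ) < a + d + k := by positivity
      field_simp
      ring
    rw [e4] at hmul
    exact hmul
  -- summability of the right-hand side
  have hβnn : ∀ k : ℕ, (0:ℝ) ≤ 1 / (a + (k:ℝ)) ^ 2 - 1 / (a + d + (k:ℝ)) ^ 2 := by
    intro k
    have h1 : (0:ℝ) < a + k := by positivity
    have h2 : (0:ℝ) < a + d + k := by positivity
    rw [sub_nonneg]
    apply one_div_le_one_div_of_le (by positivity)
    nlinarith
  have hβsum : Summable (fun k : ℕ => 1 / (a + (k:ℝ)) ^ 2 - 1 / (a + d + (k:ℝ)) ^ 2) := by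
    refine Summable.of_nonneg_of_le hβnn (fun k => ?_) (summable_inv_sq ha)
    have h2 : (0:ℝ) < a + d + k := by positivity
    have : (0:ℝ) ≤ 1 / (a + d + (k:ℝ)) ^ 2 := by positivity
    linarith
  -- conclude
  have hlt := Summable.tsum_lt_tsum_of_nonneg (i := 0)
    (fun k => by have := hTmono k; have := (hTpos (k+1)).le; nlinarith)
    (fun k => (hterm k).le) (hterm 0) (hβsum.mul_left d)
  rw [hsq.tsum_eq] at hlt
  calc (psi (a + d) - psi a) ^ 2 = T 0 ^ 2 := by
        rw [hT_def]
        norm_num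
    _ < ∑' k : ℕ, d * (1 / (a + (k:ℝ)) ^ 2 - 1 / (a + d + (k:ℝ)) ^ 2) := hlt
    _ = d * ∑' k : ℕ, (1 / (a + (k:ℝ)) ^ 2 - 1 / (a + d + (k:ℝ)) ^ 2) := tsum_mul_left

lemma psi_diff_ge {y d : ℝ} (hy : 0 < y) (hd : 0 ≤ d) : d / (y + d) ≤ psi (y + d) - psi y := by
  rcases eq_or_lt_of_le hd with h | hd'
  · simp [← h]
  have h := hasSum_psi_diff hy (show y < y + d by linarith)
  have htele := (hasSum_tele (show (0:ℝ) < y + d by linarith)).mul_left d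
  rw [mul_one_div] at htele
  refine hasSum_le (fun k => ?_) htele h
  have hk : (0:ℝ) ≤ (k:ℝ) := Nat.cast_nonneg k
  have h1 : (0:ℝ) < y + k := by positivity
  have h2 : (0:ℝ) < y + d + k := by positivity
  have h3 : (0:ℝ) < y + d + k + 1 := by positivity
  have e : 1 / (y + k) - 1 / (y + d + k) = d / ((y + k) * (y + d + k)) := by
    field_simp
    ring
  rw [e, mul_one_div]
  apply div_le_div_of_nonneg_left hd (by positivity)
  nlinarith

noncomputable def Dfun (s t x : ℝ) : ℝ := ∑' k : ℕ, (1 / (x + s + k) - 1 / (x + t + k))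
noncomputable def Qfun (s t x : ℝ) : ℝ := ∑' k : ℕ, (1 / (x + s + k) ^ 2 - 1 / (x + t + k) ^ 2)
noncomputable def Ffun (s t x : ℝ) : ℝ :=
  Real.exp ((Real.log (Real.Gamma (x + t)) - Real.log (Real.Gamma (x + s))) / (t - s))

section main
variable {s t : ℝ}

lemma Dfun_eq (hs : 0 ≤ s) (hst : s < t) {x : ℝ} (hx : 0 < x) :
    Dfun s t x = psi (x + t) - psi (x + s) :=
  (hasSum_psi_diff (by linarith) (by linarith)).tsum_eq

lemma Qfun_summand_nonneg (hs : 0 ≤ s) (hst : s < t) {x : ℝ} (hx : 0 < x) (k : ℕ) :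
    0 ≤ 1 / (x + s + k) ^ 2 - 1 / (x + t + k) ^ 2 := by
  have hk : (0:ℝ) ≤ (k:ℝ) := Nat.cast_nonneg k
  have h1 : (0:ℝ) < x + s + k := by linarith
  have h2 : (0:ℝ) < x + t + k := by linarith
  rw [sub_nonneg]
  apply one_div_le_one_div_of_le (by positivity)
  nlinarith

lemma Qfun_summable (hs : 0 ≤ s) (hst : s < t) {x : ℝ} (hx : 0 < x) :
    Summable (fun k : ℕ => 1 / (x + s + k) ^ 2 - 1 / (x + t + k) ^ 2) := by
  refine Summable.of_nonneg_of_le (f := fun k : ℕ => 1 / (x + s + (k:ℝ)) ^ 2)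
    (Qfun_summand_nonneg hs hst hx) (fun k => ?_)
    (summable_inv_sq (show (0:ℝ) < x + s by linarith))
  have hk : (0:ℝ) ≤ (k:ℝ) := Nat.cast_nonneg k
  have h2 : (0:ℝ) < x + t + k := by linarith
  have h3 : (0:ℝ) ≤ 1 / (x + t + k) ^ 2 := by positivity
  linarith

lemma Qfun_pos (hs : 0 ≤ s) (hst : s < t) {x : ℝ} (hx : 0 < x) : 0 < Qfun s t x := by
  refine Summable.tsum_pos (Qfun_summable hs hst hx) (Qfun_summand_nonneg hs hst hx) 0 ?_
  have h1 : (0:ℝ) < x + s + ((0:ℕ):ℝ) := by push_cast; linarith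
  have h2 : x + s + ((0:ℕ):ℝ) < x + t + ((0:ℕ):ℝ) := by push_cast; linarith
  rw [sub_pos]
  have h3 : (0:ℝ) < (x + s + ((0:ℕ):ℝ)) ^ 2 := by positivity
  apply one_div_lt_one_div_of_lt h3
  nlinarith

lemma hasDerivAt_one_div_shift (c : ℝ) {y : ℝ} (h : 0 < y + c) :
    HasDerivAt (fun w : ℝ => 1 / (w + c)) (-(1 / (y + c) ^ 2)) y := by
  have h2 := ((hasDerivAt_id y).add_const c).inv h.ne'
  simpa [one_div, neg_div, Pi.inv_def] using h2

lemma hasDerivAt_term (hs : 0 ≤ s) (hst : s < t) (k : ℕ) {y : ℝ} (hy : 0 < y) :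
    HasDerivAt (fun w : ℝ => 1 / (w + s + k) - 1 / (w + t + k))
      (1 / (y + t + k) ^ 2 - 1 / (y + s + k) ^ 2) y := by
  have hk : (0:ℝ) ≤ (k:ℝ) := Nat.cast_nonneg k
  have h1 : (0:ℝ) < y + (s + k) := by linarith
  have h2 : (0:ℝ) < y + (t + k) := by linarith
  have d1 := hasDerivAt_one_div_shift (s + (k:ℝ)) h1
  have d2 := hasDerivAt_one_div_shift (t + (k:ℝ)) h2
  have e1 : (fun w : ℝ => 1 / (w + (s + (k:ℝ)))) = fun w : ℝ => 1 / (w + s + k) := by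
    funext w; ring_nf
  have e2 : (fun w : ℝ => 1 / (w + (t + (k:ℝ)))) = fun w : ℝ => 1 / (w + t + k) := by
    funext w; ring_nf
  rw [e1] at d1; rw [e2] at d2
  have := d1.sub d2
  have e3 : -(1 / (y + (s + (k:ℝ))) ^ 2) - -(1 / (y + (t + (k:ℝ))) ^ 2)
      = 1 / (y + t + k) ^ 2 - 1 / (y + s + k) ^ 2 := by ring_nf
  rwa [e3] at this

lemma hasDerivAt_Dfun (hs : 0 ≤ s) (hst : s < t) {x : ℝ} (hx : 0 < x) :
    HasDerivAt (Dfun s t) (-(Qfun s t x)) x := by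
  have hball : x ∈ Ioi (x / 2) := by simp; linarith
  have hx2 : (0:ℝ) < x / 2 := by linarith
  have hDer : HasDerivAt (fun y => ∑' k : ℕ, (1 / (y + s + k) - 1 / (y + t + k)))
      (∑' k : ℕ, (1 / (x + t + k) ^ 2 - 1 / (x + s + k) ^ 2)) x := by
    apply hasDerivAt_tsum_of_isPreconnected (summable_inv_sq hx2)
      isOpen_Ioi (convex_Ioi (x/2)).isPreconnected
      (g' := fun (k : ℕ) (y : ℝ) => 1 / (y + t + k) ^ 2 - 1 / (y + s + k) ^ 2)
      (y₀ := x) ?_ ?_ hball ?_ hball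
    · intro k y hy
      exact hasDerivAt_term hs hst k (lt_trans hx2 (mem_Ioi.mp hy))
    · intro k y hy
      have hy2 : x / 2 < y := mem_Ioi.mp hy
      have hk : (0:ℝ) ≤ (k:ℝ) := Nat.cast_nonneg k
      have h1 : (0:ℝ) < y + s + k := by linarith
      have h2 : (0:ℝ) < y + t + k := by linarith
      have h3 : (0:ℝ) < x / 2 + k := by linarith
      have hnn : 1 / (y + t + k) ^ 2 - 1 / (y + s + k) ^ 2 ≤ 0 := by
        rw [sub_nonpos]
        apply one_div_le_one_div_of_le (by positivity)
        nlinarith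
      rw [Real.norm_eq_abs, abs_of_nonpos hnn, neg_sub]
      have h4 : (0:ℝ) ≤ 1 / (y + t + k) ^ 2 := by positivity
      have h5 : 1 / (y + s + k) ^ 2 ≤ 1 / (x / 2 + k) ^ 2 := by
        apply one_div_le_one_div_of_le (by positivity)
        nlinarith
      linarith
    · exact (hasSum_psi_diff (show (0:ℝ) < x + s by linarith)
        (show x + s < x + t by linarith)).summable
  have hval : (∑' k : ℕ, (1 / (x + t + k) ^ 2 - 1 / (x + s + k) ^ 2)) = -(Qfun s t x) := by
    rw [show (fun k : ℕ => 1 / (x + t + k) ^ 2 - 1 / (x + s + k) ^ 2)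
      = fun k : ℕ => -(1 / (x + s + k) ^ 2 - 1 / (x + t + k) ^ 2) by funext k; ring, tsum_neg]
    rfl
  rw [hval] at hDer
  exact hDer

lemma Ffun_pos (x : ℝ) : 0 < Ffun s t x := Real.exp_pos _

lemma hasDerivAt_Ffun (hs : 0 ≤ s) (hst : s < t) {x : ℝ} (hx : 0 < x) :
    HasDerivAt (Ffun s t) (Ffun s t x * (Dfun s t x / (t - s))) x := by
  have c1 : HasDerivAt (fun y => Real.log (Real.Gamma (y + t))) (psi (x + t)) x :=
    HasDerivAt.comp_add_const x t (hasDerivAt_logGamma (by linarith))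
  have c2 : HasDerivAt (fun y => Real.log (Real.Gamma (y + s))) (psi (x + s)) x :=
    HasDerivAt.comp_add_const x s (hasDerivAt_logGamma (by linarith))
  have inner := (c1.sub c2).div_const (t - s)
  have hF := inner.exp
  rw [Dfun_eq hs hst hx]
  exact hF

lemma hasDerivAt_h (hs : 0 ≤ s) (hst : s < t) {x : ℝ} (hx : 0 < x) :
    HasDerivAt (fun y => Ffun s t y * Dfun s t y)
      (Ffun s t x * ((Dfun s t x) ^ 2 / (t - s) - Qfun s t x)) x := by
  have h := (hasDerivAt_Ffun hs hst hx).mul (hasDerivAt_Dfun hs hst hx)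
  have e : Ffun s t x * (Dfun s t x / (t - s)) * Dfun s t x + Ffun s t x * -(Qfun s t x)
      = Ffun s t x * ((Dfun s t x) ^ 2 / (t - s) - Qfun s t x) := by ring
  rwa [e] at h
end main

section main2
variable {s t : ℝ}

lemma tendsto_ratio (c₁ c₂ : ℝ) : Tendsto (fun x : ℝ => (x + c₁) / (x + c₂)) atTop (𝓝 1) := by
  have h0 : Tendsto (fun x : ℝ => (x + c₂)⁻¹) atTop (𝓝 0) :=
    Tendsto.inv_tendsto_atTop (tendsto_atTop_add_const_right atTop c₂ tendsto_id)
  have h1 : Tendsto (fun x : ℝ => 1 + (c₁ - c₂) * (x + c₂)⁻¹) atTop (𝓝 (1 + (c₁ - c₂) * 0)) :=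
    tendsto_const_nhds.add (tendsto_const_nhds.mul h0)
  rw [mul_zero, add_zero] at h1
  refine Filter.Tendsto.congr' ?_ h1
  filter_upwards [eventually_gt_atTop (-c₂)] with x hx
  have hne : x + c₂ ≠ 0 := ne_of_gt (by linarith)
  field_simp
  ring

lemma Ffun_lb (hs : 0 ≤ s) (hst : s < t) {x : ℝ} (hx : 1 < x) :
    x + s - 1 ≤ Ffun s t x := by
  have hco : ConvexOn ℝ (Ioi 0) (fun y => Real.log (Real.Gamma y)) := Real.convexOn_log_Gamma
  have ha1 : (0:ℝ) < x + s - 1 := by linarith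
  have hb : (0:ℝ) < x + t := by linarith
  have hsl := hco.slope_mono_adjacent (mem_Ioi.mpr ha1) (mem_Ioi.mpr hb)
    (show x + s - 1 < x + s by linarith) (show x + s < x + t by linarith)
  have hsl' : (Real.log (Real.Gamma (x + s)) - Real.log (Real.Gamma (x + s - 1))) / (x + s - (x + s - 1))
      ≤ (Real.log (Real.Gamma (x + t)) - Real.log (Real.Gamma (x + s))) / (x + t - (x + s)) := hsl
  rw [show x + s - (x + s - 1) = 1 by ring, show x + t - (x + s) = t - s by ring, div_one] at hsl'
  have hrec := logGamma_rec ha1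
  rw [show x + s - 1 + 1 = x + s by ring] at hrec
  have hL : Real.log (x + s - 1)
      = Real.log (Real.Gamma (x + s)) - Real.log (Real.Gamma (x + s - 1)) := by
    rw [hrec]; ring
  have hkey : Real.log (x + s - 1)
      ≤ (Real.log (Real.Gamma (x + t)) - Real.log (Real.Gamma (x + s))) / (t - s) := by
    rw [← hL] at hsl'
    exact hsl'
  calc x + s - 1 = Real.exp (Real.log (x + s - 1)) := (Real.exp_log ha1).symm
    _ ≤ Ffun s t x := Real.exp_le_exp.mpr hkey

lemma Ffun_ub (hs : 0 ≤ s) (hst : s < t) {x : ℝ} (hx : 0 < x) :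
    Ffun s t x ≤ x + t := by
  have hco : ConvexOn ℝ (Ioi 0) (fun y => Real.log (Real.Gamma y)) := Real.convexOn_log_Gamma
  have ha : (0:ℝ) < x + s := by linarith
  have hb : (0:ℝ) < x + t := by linarith
  have hsl := hco.slope_mono_adjacent (mem_Ioi.mpr ha) (mem_Ioi.mpr (show (0:ℝ) < x + t + 1 by linarith))
    (show x + s < x + t by linarith) (show x + t < x + t + 1 by linarith)
  have hsl' : (Real.log (Real.Gamma (x + t)) - Real.log (Real.Gamma (x + s))) / (x + t - (x + s))
      ≤ (Real.log (Real.Gamma (x + t + 1)) - Real.log (Real.Gamma (x + t))) / (x + t + 1 - (x + t)) := hsl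
  rw [show x + t - (x + s) = t - s by ring, show x + t + 1 - (x + t) = 1 by ring, div_one] at hsl'
  have hrec := logGamma_rec hb
  have hkey : (Real.log (Real.Gamma (x + t)) - Real.log (Real.Gamma (x + s))) / (t - s)
      ≤ Real.log (x + t) := by
    rw [hrec] at hsl'
    linarith
  calc Ffun s t x ≤ Real.exp (Real.log (x + t)) := Real.exp_le_exp.mpr hkey
    _ = x + t := Real.exp_log hb

lemma Dfun_ub (hs : 0 ≤ s) (hd : 1 < t - s) {x : ℝ} (hx : 0 < x) :
    Dfun s t x ≤ (t - s) / (x + s) := by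
  have hst : s < t := by linarith
  rw [Dfun_eq hs hst hx]
  have h := psi_diff_le (show (0:ℝ) < x + s by linarith) (le_of_lt hd)
  rwa [show x + s + (t - s) = x + t by ring] at h

lemma Dfun_lb (hs : 0 ≤ s) (hd : 1 < t - s) {x : ℝ} (hx : 0 < x) :
    (t - s) / (x + t) ≤ Dfun s t x := by
  have hst : s < t := by linarith
  rw [Dfun_eq hs hst hx]
  have h := psi_diff_ge (show (0:ℝ) < x + s by linarith) (show (0:ℝ) ≤ t - s by linarith)
  rwa [show x + s + (t - s) = x + t by ring] at h

lemma tendsto_h (hs : 0 ≤ s) (ht : 0 ≤ t) (hd : 1 < t - s) :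
    Tendsto (fun x => Ffun s t x * Dfun s t x) atTop (𝓝 (t - s)) := by
  have hst : s < t := by linarith
  have hd0 : (0:ℝ) < t - s := by linarith
  apply tendsto_of_tendsto_of_tendsto_of_le_of_le'
    (g := fun x : ℝ => (x + (s - 1)) * ((t - s) / (x + t)))
    (h := fun x : ℝ => (x + t) * ((t - s) / (x + s)))
  · have h1 := (tendsto_ratio (s - 1) t).const_mul (t - s)
    rw [mul_one] at h1
    refine h1.congr (fun x => by ring)
  · have h1 := (tendsto_ratio t s).const_mul (t - s)
    rw [mul_one] at h1
    refine h1.congr (fun x => by ring)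
  · filter_upwards [eventually_gt_atTop 1] with x hx
    have hx0 : (0:ℝ) < x := by linarith
    have hF := Ffun_lb hs hst hx
    have hD := Dfun_lb hs hd hx0
    have h1 : (0:ℝ) ≤ (t - s) / (x + t) := by positivity
    have h2 : (0:ℝ) ≤ Ffun s t x := (Ffun_pos x).le
    calc (x + (s - 1)) * ((t - s) / (x + t)) = (x + s - 1) * ((t - s) / (x + t)) := by ring
      _ ≤ Ffun s t x * Dfun s t x := mul_le_mul hF hD h1 h2
  · filter_upwards [eventually_gt_atTop 1] with x hx
    have hx0 : (0:ℝ) < x := by linarith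
    have hF := Ffun_ub hs hst hx0
    have hD := Dfun_ub hs hd hx0
    have h1 : (0:ℝ) ≤ Dfun s t x := le_trans (by positivity) (Dfun_lb hs hd hx0)
    have h2 : (0:ℝ) ≤ x + t := by linarith
    exact mul_le_mul hF hD h1 h2

lemma deriv_h_neg (hs : 0 ≤ s) (hd : 1 < t - s) {y : ℝ} (hy : 0 < y) :
    Ffun s t y * ((Dfun s t y) ^ 2 / (t - s) - Qfun s t y) < 0 := by
  have hst : s < t := by linarith
  have hd0 : (0:ℝ) < t - s := by linarith
  apply mul_neg_of_pos_of_neg (Ffun_pos y)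
  rw [sub_neg]
  rw [div_lt_iff₀ hd0]
  have hstar := star (show (0:ℝ) < y + s by linarith) hd
  simp only [show y + s + (t - s) = y + t from by ring] at hstar
  have hQ : Qfun s t y = ∑' k : ℕ, (1 / (y + s + (k:ℝ)) ^ 2 - 1 / (y + t + (k:ℝ)) ^ 2) := rfl
  rw [Dfun_eq hs hst hy, hQ]
  calc (psi (y + t) - psi (y + s)) ^ 2
      < (t - s) * ∑' k : ℕ, (1 / (y + s + (k:ℝ)) ^ 2 - 1 / (y + t + (k:ℝ)) ^ 2) := hstar
    _ = (∑' k : ℕ, (1 / (y + s + (k:ℝ)) ^ 2 - 1 / (y + t + (k:ℝ)) ^ 2)) * (t - s) := by ring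

lemma strictAntiOn_h (hs : 0 ≤ s) (hd : 1 < t - s) :
    StrictAntiOn (fun y => Ffun s t y * Dfun s t y) (Ioi 0) := by
  have hst : s < t := by linarith
  apply strictAntiOn_of_deriv_neg (convex_Ioi 0)
  · intro y hy
    exact ((hasDerivAt_h hs hst hy).continuousAt).continuousWithinAt
  · intro y hy
    rw [interior_Ioi] at hy
    rw [(hasDerivAt_h hs hst hy).deriv]
    exact deriv_h_neg hs hd hy

lemma h_gt (hs : 0 ≤ s) (ht : 0 ≤ t) (hd : 1 < t - s) {x : ℝ} (hx : 0 < x) :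
    t - s < Ffun s t x * Dfun s t x := by
  have hanti := strictAntiOn_h hs hd
  have hlim := tendsto_h hs ht hd
  have h1 : t - s ≤ Ffun s t (x + 1) * Dfun s t (x + 1) := by
    apply le_of_tendsto hlim
    filter_upwards [eventually_ge_atTop (x + 1)] with y hy
    rcases eq_or_lt_of_le hy with h | h
    · rw [← h]
    · exact (hanti (mem_Ioi.mpr (by linarith)) (mem_Ioi.mpr (by linarith)) h).le
  have h2 : Ffun s t (x + 1) * Dfun s t (x + 1) < Ffun s t x * Dfun s t x :=
    hanti (mem_Ioi.mpr hx) (mem_Ioi.mpr (by linarith)) (by linarith)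
  linarith

lemma z_eq (hs : 0 ≤ s) (hst : s < t) {x : ℝ} (hx : 0 < x) : z s t x = Ffun s t x - x := by
  unfold z Ffun
  have hb : 0 < Real.Gamma (x + t) := Real.Gamma_pos_of_pos (by linarith)
  have ha : 0 < Real.Gamma (x + s) := Real.Gamma_pos_of_pos (by linarith)
  rw [Real.rpow_def_of_pos (div_pos hb ha), Real.log_div hb.ne' ha.ne', mul_one_div]

lemma hasDerivAt_z (hs : 0 ≤ s) (hd : 1 < t - s) {x : ℝ} (hx : 0 < x) :
    HasDerivAt (z s t) (Ffun s t x * (Dfun s t x / (t - s)) - 1) x := by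
  have hst : s < t := by linarith
  have h1 : HasDerivAt (fun y => Ffun s t y - y) (Ffun s t x * (Dfun s t x / (t - s)) - 1) x :=
    (hasDerivAt_Ffun hs hst hx).sub (hasDerivAt_id x)
  apply h1.congr_of_eventuallyEq
  filter_upwards [eventually_gt_nhds hx] with y hy
  exact z_eq hs hst hy

lemma z_mono_of (hs : 0 ≤ s) (ht : 0 ≤ t) (hd : 1 < t - s) :
    StrictMonoOn (z s t) (Ioi 0) := by
  apply strictMonoOn_of_deriv_pos (convex_Ioi 0)
  · intro y hy
    exact ((hasDerivAt_z hs hd hy).continuousAt).continuousWithinAt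
  · intro y hy
    rw [interior_Ioi] at hy
    rw [(hasDerivAt_z hs hd hy).deriv]
    have hgt := h_gt hs ht hd hy
    have hd0 : (0:ℝ) < t - s := by linarith
    rw [sub_pos, mul_div_assoc']
    rw [lt_div_iff₀ hd0, one_mul]
    exact hgt

end main2

theorem z_increasing (s t : ℝ) (hs : 0 ≤ s) (ht : 0 ≤ t) (h1 : 1 < |t - s|) :
    StrictMonoOn (z s t) (Set.Ioi 0) := by
  rcases lt_abs.mp h1 with h | h
  · exact z_mono_of hs ht h
  · have hmono := z_mono_of ht hs (show 1 < s - t by linarith)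
    apply hmono.congr
    intro x hx
    have hx0 : (0:ℝ) < x := mem_Ioi.mp hx
    have hst : s - t ≠ 0 := by intro hc; linarith
    unfold z
    have ha : 0 < Real.Gamma (x + t) := Real.Gamma_pos_of_pos (by linarith)
    have hb : 0 < Real.Gamma (x + s) := Real.Gamma_pos_of_pos (by linarith)
    have hr : 0 < Real.Gamma (x + t) / Real.Gamma (x + s) := div_pos ha hb
    congr 1
    rw [show Real.Gamma (x + s) / Real.Gamma (x + t)
      = (Real.Gamma (x + t) / Real.Gamma (x + s))⁻¹ by rw [inv_div]]
    rw [show (1:ℝ) / (t - s) = -(1 / (s - t)) by rw [← neg_sub s t, div_neg]]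
    rw [Real.rpow_neg hr.le, ← Real.inv_rpow hr.le]
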